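/- Let I be a Hausdorff topological space, P ⊆ I a closed subset, and Φ : I → I a homeomorphism with Φ(P) = P. Let η : [0,∞) → [0,∞) be a homeomorphism with η(t) < t for every t > 0. Let X := (I × [0,∞)) ∖ (P × {0}) with the subspace topology, let γ : X → X be the homeomorphism γ(x,t) = (Φ(x), η(t)), and let F : X → ℝ be a continuous proper map (preimages of compact sets are compact) satisfying F(γ(z)) = F(z) + 1 for all z ∈ X. Then for every p ∈ P, F(p,t) tends to +∞ as t tends to 0 from the right. -/

import Mathlib

open Set Filter
open scoped NNReal Topology

/-- with X = (I × [0,∞)) ∖ (P × {0}), γ(x,t) = (Φ(x), η(t)), and F a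
continuous proper real function on X with F ∘ γ = F + 1, one has F(p,t) → +∞ as
t → 0⁺, for every p ∈ P. Here [0,∞) is modelled by ℝ≥0. -/
theorem stmt12 {I : Type*} [TopologicalSpace I] [T2Space I]
    (P : Set I) (hP : IsClosed P)
    (Φ : I ≃ₜ I) (hΦP : Φ '' P = P)
    (η : ℝ≥0 ≃ₜ ℝ≥0) (hη : ∀ t : ℝ≥0, 0 < t → η t < t)
    (Xs : Set (I × ℝ≥0)) (hXs : Xs = {z : I × ℝ≥0 | ¬(z.1 ∈ P ∧ z.2 = 0)})
    (F : I × ℝ≥0 → ℝ)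
    (hFc : ContinuousOn F Xs)
    (hFprop : ∀ K : Set ℝ, IsCompact K → IsCompact (Xs ∩ F ⁻¹' K))
    (hFeq : ∀ z ∈ Xs, F (Φ z.1, η z.2) = F z + 1) :
    ∀ p ∈ P, Filter.Tendsto (fun t : ℝ≥0 => F (p, t))
      (nhdsWithin 0 (Set.Ioi 0)) Filter.atTop := by
  intro p hp
  -- η is strictly monotone
  have hηmono : StrictMono (η : ℝ≥0 → ℝ≥0) := by
    rcases Continuous.strictMono_of_inj η.continuous η.injective with h | h
    · exact h
    · exfalso
      obtain ⟨t, ht⟩ := η.surjective (η 0 + 1)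
      rcases eq_or_lt_of_le (zero_le (a := t)) with h0 | h0
      · rw [← h0] at ht
        simpa using ht
      · have h1 : η t < η 0 := h h0
        rw [ht] at h1
        simpa using h1.le
  have hη0 : η 0 = 0 := by
    obtain ⟨t, ht⟩ := η.surjective 0
    rcases eq_or_lt_of_le (zero_le (a := t)) with h0 | h0
    · rw [← h0] at ht; exact ht
    · exfalso
      have h1 : η 0 < η t := hηmono h0
      rw [ht] at h1
      simpa using h1
  have hηpos : ∀ t : ℝ≥0, 0 < t → 0 < η t := by
    intro t ht
    have := hηmono ht
    rwa [hη0] at this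
  -- membership in Xs
  have hmemXs : ∀ (q : I) (t : ℝ≥0), 0 < t → (q, t) ∈ Xs := by
    intro q t ht
    rw [hXs]
    exact fun h => ht.ne' h.2
  -- iterates
  have hΦmem : ∀ q ∈ P, Φ q ∈ P := by
    intro q hq
    rw [← hΦP]
    exact mem_image_of_mem _ hq
  have hΦiter : ∀ n : ℕ, Φ^[n] p ∈ P := by
    intro n
    induction n with
    | zero => simpa using hp
    | succ n ih => rw [Function.iterate_succ_apply']; exact hΦmem _ ih
  have hηiterpos : ∀ (n : ℕ) (t : ℝ≥0), 0 < t → 0 < η^[n] t := by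
    intro n
    induction n with
    | zero => simpa using fun t ht => ht
    | succ n ih =>
      intro t ht
      rw [Function.iterate_succ_apply']
      exact hηpos _ (ih t ht)
  have hFiter : ∀ (n : ℕ) (t : ℝ≥0), 0 < t → F (Φ^[n] p, η^[n] t) = F (p, t) + n := by
    intro n t ht
    induction n with
    | zero => simp
    | succ n ih =>
      rw [Function.iterate_succ_apply', Function.iterate_succ_apply']
      have h1 := hFeq (Φ^[n] p, η^[n] t) (hmemXs _ _ (hηiterpos n t ht))
      simp only at h1
      rw [h1, ih]
      push_cast
      ring
  -- η^[n] 1 → 0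
  have hanti : Antitone (fun n : ℕ => η^[n] (1 : ℝ≥0)) := by
    apply antitone_nat_of_succ_le
    intro n
    rw [Function.iterate_succ_apply']
    rcases eq_or_lt_of_le (zero_le (a := η^[n] (1 : ℝ≥0))) with h0 | h0
    · rw [← h0, hη0]
    · exact (hη _ h0).le
  have hlim0 : Tendsto (fun n : ℕ => η^[n] (1 : ℝ≥0)) atTop (𝓝 0) := by
    have h1 := tendsto_atTop_ciInf hanti (OrderBot.bddBelow _)
    set l := ⨅ n : ℕ, η^[n] (1 : ℝ≥0) with hl
    have h2 : Tendsto (fun n : ℕ => η^[n+1] (1 : ℝ≥0)) atTop (𝓝 (η l)) := by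
      have := (η.continuous.tendsto l).comp h1
      simpa [Function.comp_def, Function.iterate_succ_apply'] using this
    have h3 : Tendsto (fun n : ℕ => η^[n+1] (1 : ℝ≥0)) atTop (𝓝 l) :=
      (tendsto_add_atTop_iff_nat 1).mpr h1
    have hfix : η l = l := tendsto_nhds_unique h2 h3
    have hl0 : l = 0 := by
      by_contra hne
      have hpos : 0 < l := pos_iff_ne_zero.mpr hne
      exact absurd hfix (hη l hpos).ne
    rwa [hl0] at h1
  -- F (p, ·) is bounded below on (0, 1]
  have hbddbelow : ∃ m : ℝ, ∀ t : ℝ≥0, t ∈ Ioc (0 : ℝ≥0) 1 → m ≤ F (p, t) := by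
    by_contra hcon
    push_neg at hcon
    set v := F (p, 1) with hv
    have hsel : ∀ n : ℕ, ∃ s : ℝ≥0, s ∈ Ioc (0 : ℝ≥0) 1 ∧ F (p, s) = v - n := by
      intro n
      obtain ⟨t, ht, htlt⟩ := hcon (v - n)
      have hcont : ContinuousOn (fun s : ℝ≥0 => F (p, s)) (Icc t 1) := by
        apply hFc.comp ((continuous_const.prodMk continuous_id).continuousOn)
        intro s hs
        exact hmemXs p s (lt_of_lt_of_le ht.1 hs.1)
      have hsub := intermediate_value_Icc ht.2 hcont
      have hmem' : v - (n : ℝ) ∈ Icc (F (p, t)) (F (p, 1)) := by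
        constructor
        · exact htlt.le
        · have : (0 : ℝ) ≤ n := Nat.cast_nonneg n
          simp only [hv]
          linarith
      obtain ⟨s, hs, hfs⟩ := hsub hmem'
      exact ⟨s, ⟨lt_of_lt_of_le ht.1 hs.1, hs.2⟩, hfs⟩
    choose s hsmem hsval using hsel
    set w : ℕ → I × ℝ≥0 := fun n => (Φ^[n] p, η^[n] (s n)) with hw
    have hwF : ∀ n, F (w n) = v := by
      intro n
      have := hFiter n (s n) (hsmem n).1
      rw [hw]
      simp only
      rw [this, hsval n]
      ring
    have hA : IsCompact ((Xs ∩ F ⁻¹' {v}) ∩ (P ×ˢ (univ : Set ℝ≥0))) :=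
      (hFprop {v} isCompact_singleton).inter_right (hP.prod isClosed_univ)
    have hwA : ∀ n, w n ∈ (Xs ∩ F ⁻¹' {v}) ∩ (P ×ˢ (univ : Set ℝ≥0)) := by
      intro n
      refine ⟨⟨hmemXs _ _ (hηiterpos n _ (hsmem n).1), ?_⟩, ⟨hΦiter n, mem_univ _⟩⟩
      simp [hwF n]
    have hle : map w atTop ≤ 𝓟 ((Xs ∩ F ⁻¹' {v}) ∩ (P ×ˢ (univ : Set ℝ≥0))) := by
      rw [le_principal_iff, mem_map]
      exact Filter.Eventually.of_forall hwA
    obtain ⟨x, hxA, hx⟩ := hA.exists_clusterPt hle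
    have hsnd : Tendsto (fun n => (w n).2) atTop (𝓝 0) := by
      apply tendsto_of_tendsto_of_tendsto_of_le_of_le tendsto_const_nhds hlim0
      · intro n; exact zero_le
      · intro n; exact (hηmono.monotone.iterate n) (hsmem n).2
    have hx2 : x.2 = 0 := by
      have hne : NeBot (𝓝 x ⊓ map w atTop) := hx
      have hmap : map Prod.snd (𝓝 x ⊓ map w atTop) ≤ 𝓝 x.2 ⊓ 𝓝 0 := by
        refine le_inf ?_ ?_
        · exact le_trans (map_mono inf_le_left) (continuous_snd.tendsto x)
        · refine le_trans (map_mono inf_le_right) ?_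
          rw [map_map]
          exact hsnd
      have : NeBot (𝓝 x.2 ⊓ 𝓝 (0 : ℝ≥0)) := neBot_of_le hmap
      exact eq_of_nhds_neBot this
    have hxXs : x ∈ Xs := hxA.1.1
    have hxP : x.1 ∈ P := hxA.2.1
    rw [hXs] at hxXs
    exact hxXs ⟨hxP, hx2⟩
  obtain ⟨m, hm⟩ := hbddbelow
  rw [tendsto_atTop]
  intro C
  set C' := |C| + |m| + 1 with hC'
  have hCC' : C < C' := by
    have := le_abs_self C
    have := abs_nonneg m
    linarith
  have hmC' : -C' < m := by
    have := neg_abs_le m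
    have := abs_nonneg C
    linarith
  have hC'pos : 0 < C' := by
    have := abs_nonneg C
    have := abs_nonneg m
    linarith
  have hK : IsCompact (Xs ∩ F ⁻¹' Icc (-C') C') := hFprop _ isCompact_Icc
  have hp0 : (p, (0 : ℝ≥0)) ∉ Xs ∩ F ⁻¹' Icc (-C') C' := by
    rw [hXs]
    rintro ⟨h1, -⟩
    exact h1 ⟨hp, rfl⟩
  have hev : ∀ᶠ t in 𝓝 (0 : ℝ≥0), (p, t) ∉ Xs ∩ F ⁻¹' Icc (-C') C' := by
    have hcont : Tendsto (fun t : ℝ≥0 => ((p, t) : I × ℝ≥0)) (𝓝 0) (𝓝 (p, (0 : ℝ≥0))) :=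
      (continuous_const.prodMk continuous_id).tendsto 0
    exact hcont.eventually (hK.isClosed.isOpen_compl.eventually_mem hp0)
  obtain ⟨δ, hδpos, hδ⟩ := NNReal.nhds_zero_basis.eventually_iff.mp hev
  set δ' := min δ 1 with hδ'
  have hδ'pos : 0 < δ' := lt_min hδpos one_pos
  have hδ'le1 : δ' ≤ 1 := min_le_right _ _
  have hcontIoo : ContinuousOn (fun t : ℝ≥0 => F (p, t)) (Ioo 0 δ') := by
    apply hFc.comp ((continuous_const.prodMk continuous_id).continuousOn)
    intro t ht
    exact hmemXs p t ht.1
  have himg : (fun t : ℝ≥0 => F (p, t)) '' (Ioo 0 δ') ⊆ Iio (-C') ∪ Ioi C' := by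
    rintro x ⟨t, ht, rfl⟩
    have hnot : (p, t) ∉ Xs ∩ F ⁻¹' Icc (-C') C' :=
      hδ (lt_of_lt_of_le ht.2 (min_le_left _ _))
    have hni : F (p, t) ∉ Icc (-C') C' := fun hcc => hnot ⟨hmemXs p t ht.1, hcc⟩
    rw [mem_Icc] at hni
    push_neg at hni
    rcases lt_or_ge (F (p, t)) (-C') with h | h
    · exact Or.inl h
    · exact Or.inr (hni h)
  have hpc : IsPreconnected ((fun t : ℝ≥0 => F (p, t)) '' (Ioo 0 δ')) :=
    isPreconnected_Ioo.image _ hcontIoo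
  have hdisj : Disjoint (Iio (-C')) (Ioi C') := by
    rw [Set.disjoint_left]
    intro x hx1 hx2
    simp only [mem_Iio] at hx1
    simp only [mem_Ioi] at hx2
    linarith
  rcases hpc.subset_or_subset isOpen_Iio isOpen_Ioi hdisj himg with h | h
  · exfalso
    have ht0 : δ' / 2 ∈ Ioo (0 : ℝ≥0) δ' := ⟨half_pos hδ'pos, half_lt_self hδ'pos⟩
    have h1 : F (p, δ' / 2) < -C' := h (mem_image_of_mem _ ht0)
    have h2 : m ≤ F (p, δ' / 2) := hm _ ⟨ht0.1, le_trans ht0.2.le hδ'le1⟩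
    linarith
  · filter_upwards [Ioo_mem_nhdsGT
      hδ'pos] with t ht
    have h1 : C' < F (p, t) := h (mem_image_of_mem _ ht)
    linarith
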